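/- arXiv:2412.13290 — 2 statements merged into one kernel-verified Lean document; each statement's English description precedes it below -/
import Mathlib

section
/- Fix G, costs c'_i, set C, and threshold β as in the pseudo-core definition. Consider the greedy algorithm that, starting from S̄ = S, repeatedly picks i ∈ S̄ \ C minimizing deg_{S̄}(i)(deg_{S̄}(i)+1)/c'_i and removes it if this value is less than β, stopping otherwise. The output of this algorithm equals the unique β-pseudo-core of S (the maximal subset T ⊆ S with deg_T(i)(deg_T(i)+1)/c'_i ≥ β for all i ∈ T \ C). -/
open Finset

namespace Stmt6

variable {V : Type*} [Fintype V] [DecidableEq V]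

/-- Inner degree of `i` in `T`. -/
def degIn (G : SimpleGraph V) [DecidableRel G.Adj] (T : Finset V) (i : V) : ℕ :=
  (G.neighborFinset i ∩ T).card

/-- The greedy key: `deg_T(i)(deg_T(i)+1)/c'_i`. -/
noncomputable def key (G : SimpleGraph V) [DecidableRel G.Adj]
    (c' : V → ℝ) (T : Finset V) (i : V) : ℝ :=
  ((degIn G T i : ℝ) * ((degIn G T i : ℝ) + 1)) / c' i

/-- One step of the greedy pseudo-core algorithm: remove a minimizer of the key
among `S̄ \ C` whose key is below `β`. -/
def GreedyStep (G : SimpleGraph V) [DecidableRel G.Adj]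
    (c' : V → ℝ) (C : Finset V) (β : ℝ) (S T : Finset V) : Prop :=
  ∃ v ∈ S \ C, (∀ w ∈ S \ C, key G c' S v ≤ key G c' S w) ∧
    key G c' S v < β ∧ T = S.erase v


lemma key_mono (G : SimpleGraph V) [DecidableRel G.Adj] (c' : V → ℝ)
    {T T' : Finset V} (h : T' ⊆ T) {i : V} (hci : 0 < c' i) :
    key G c' T' i ≤ key G c' T i := by
  have hd : (degIn G T' i : ℝ) ≤ degIn G T i := by
    exact_mod_cast Finset.card_le_card (Finset.inter_subset_inter le_rfl h)
  unfold key
  gcongr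

/-- If the greedy algorithm, run from `S`, terminates at `T` (no further step is
possible), then `T` is the unique maximal subset of `S` all of whose non-`C`
members satisfy `deg_T(i)(deg_T(i)+1)/c'_i ≥ β`, i.e. the β-pseudo-core of `S`. -/
theorem stmt6 (G : SimpleGraph V) [DecidableRel G.Adj]
    (c' : V → ℝ) (C : Finset V) (β : ℝ) (hβ : 0 < β)
    (hc : ∀ i, i ∉ C → 0 < c' i) (S T : Finset V)
    (hrun : Relation.ReflTransGen (GreedyStep G c' C β) S T)
    (hterm : ∀ T', ¬ GreedyStep G c' C β T T') :
    (T ⊆ S ∧ ∀ i ∈ T \ C, key G c' T i ≥ β) ∧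
    ∀ T' ⊆ S, (∀ i ∈ T' \ C, key G c' T' i ≥ β) → T' ⊆ T := by
  -- T ⊆ S
  have hTS : T ⊆ S := by
    clear hterm
    induction hrun with
    | refl => exact Finset.Subset.refl _
    | tail _ hstep ih =>
      obtain ⟨v, _, _, _, rfl⟩ := hstep
      exact (Finset.erase_subset _ _).trans ih
  have hcore : ∀ i ∈ T \ C, key G c' T i ≥ β := by
    intro i hi
    by_contra hlt
    push_neg at hlt
    obtain ⟨v, hv, hmin⟩ := Finset.exists_min_image (T \ C) (key G c' T) ⟨i, hi⟩
    exact hterm (T.erase v) ⟨v, hv, hmin, lt_of_le_of_lt (hmin i hi) hlt, rfl⟩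
  refine ⟨⟨hTS, hcore⟩, ?_⟩
  intro T' hT'S hT'
  have : T' ⊆ T := by
    clear hterm hTS hcore
    induction hrun with
    | refl => exact hT'S
    | tail _ hstep ih =>
      obtain ⟨v, hv, _, hvβ, rfl⟩ := hstep
      intro x hx
      rw [Finset.mem_erase]
      refine ⟨?_, ih hx⟩
      rintro rfl
      have hvC : x ∉ C := (Finset.mem_sdiff.1 hv).2
      have h1 : β ≤ key G c' T' x := hT' x (Finset.mem_sdiff.2 ⟨hx, hvC⟩)
      have h2 : key G c' T' x ≤ key G c' _ x := key_mono G c' ih (hc x hvC)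
      linarith
  exact this


end Stmt6
end

section
/- Let G = (V, E) be a finite simple graph, S ⊆ V finite, C ⊆ V, and costs c_i ≥ 0. Define 𝓛(S) := 1 − ∑_{i ∈ S \ C} c_i/(deg_S(i) + 1). Suppose v ∈ S \ C attains the minimum of deg_S(i)(deg_S(i)+1)/c_i over i ∈ S \ C with c_i > 0, and deg_S(v) ≥ 1. Then 𝓛(S \ {v}) ≥ 𝓛(S). -/
open Finset

/-- Removing a minimizer `v` of `deg_S(i)(deg_S(i)+1)/c_i` (over `i ∈ S \ C` with
`c_i > 0`, with `deg_S(v) ≥ 1`) does not decrease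
`𝓛(S) = 1 − ∑_{i ∈ S\C} c_i/(deg_S(i)+1)`. -/
theorem stmt7 {V : Type*} [Fintype V] [DecidableEq V]
    (G : SimpleGraph V) [DecidableRel G.Adj]
    (S C : Finset V) (c : V → ℝ) (hc : ∀ i, 0 ≤ c i)
    (v : V) (hv : v ∈ S \ C) (hcv : 0 < c v)
    (hdeg : 1 ≤ (G.neighborFinset v ∩ S).card)
    (hmin : ∀ i ∈ S \ C, 0 < c i →
      ((G.neighborFinset v ∩ S).card : ℝ) * ((G.neighborFinset v ∩ S).card + 1) / c v
        ≤ ((G.neighborFinset i ∩ S).card : ℝ) * ((G.neighborFinset i ∩ S).card + 1) / c i) :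
    1 - ∑ i ∈ (S.erase v) \ C, c i / (((G.neighborFinset i ∩ S.erase v).card : ℝ) + 1)
      ≥ 1 - ∑ i ∈ S \ C, c i / (((G.neighborFinset i ∩ S).card : ℝ) + 1) := by
  have hvS : v ∈ S := (mem_sdiff.mp hv).1
  set dv : ℕ := (G.neighborFinset v ∩ S).card with hdvdef
  have hdvpos : (0:ℝ) < dv := by exact_mod_cast hdeg
  have hset : (S.erase v) \ C = (S \ C).erase v := by
    ext x; simp only [mem_erase, mem_sdiff]; tauto
  rw [hset]
  have hsum : ∑ i ∈ S \ C, c i / (((G.neighborFinset i ∩ S).card : ℝ) + 1)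
      = c v / ((dv : ℝ) + 1)
        + ∑ i ∈ (S \ C).erase v, c i / (((G.neighborFinset i ∩ S).card : ℝ) + 1) :=
    (Finset.add_sum_erase _ _ hv).symm
  rw [hsum]
  have key : ∀ i ∈ (S \ C).erase v,
      c i / (((G.neighborFinset i ∩ S.erase v).card : ℝ) + 1)
        - c i / (((G.neighborFinset i ∩ S).card : ℝ) + 1)
      ≤ if i ∈ G.neighborFinset v ∩ S then c v / ((dv : ℝ) * ((dv : ℝ) + 1)) else 0 := by
    intro i hi
    have hiSC : i ∈ S \ C := mem_of_mem_erase hi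
    by_cases hiv : i ∈ G.neighborFinset v ∩ S
    · have hadj : G.Adj v i := by
        simpa [SimpleGraph.mem_neighborFinset] using (mem_inter.mp hiv).1
      have hvNi : v ∈ G.neighborFinset i ∩ S := by
        simp [SimpleGraph.mem_neighborFinset, hadj.symm, hvS]
      have hint : G.neighborFinset i ∩ S.erase v = (G.neighborFinset i ∩ S).erase v := by
        ext x; simp only [mem_inter, mem_erase]; tauto
      have hcard : ((G.neighborFinset i ∩ S.erase v).card : ℝ) + 1
          = ((G.neighborFinset i ∩ S).card : ℝ) := by
        rw [hint, card_erase_of_mem hvNi]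
        have : 1 ≤ (G.neighborFinset i ∩ S).card := card_pos.mpr ⟨v, hvNi⟩
        push_cast [Nat.cast_sub this]
        ring
      have hdipos : (0:ℝ) < ((G.neighborFinset i ∩ S).card : ℝ) := by
        have : 1 ≤ (G.neighborFinset i ∩ S).card := card_pos.mpr ⟨v, hvNi⟩
        exact_mod_cast this
      set di : ℝ := ((G.neighborFinset i ∩ S).card : ℝ) with hdidef
      rw [hcard, if_pos hiv]
      have hdiff : c i / di - c i / (di + 1) = c i / (di * (di + 1)) := by
        field_simp; ring
      rw [hdiff]
      rcases eq_or_lt_of_le (hc i) with h0 | hci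
      · rw [← h0, zero_div]
        positivity
      · have hm := hmin i hiSC hci
        rw [div_le_div_iff₀ hcv hci] at hm
        rw [div_le_div_iff₀ (by positivity) (by positivity)]
        nlinarith [hm]
    · have hnoadj : v ∉ G.neighborFinset i := by
        intro h
        exact hiv (mem_inter.mpr ⟨by simpa [SimpleGraph.mem_neighborFinset] using
          (SimpleGraph.mem_neighborFinset G i v).mp h |>.symm, (mem_sdiff.mp hiSC).1⟩)
      have hint : G.neighborFinset i ∩ S.erase v = G.neighborFinset i ∩ S := by
        ext x; simp only [mem_inter, mem_erase]
        constructor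
        · rintro ⟨h1, _, h3⟩; exact ⟨h1, h3⟩
        · rintro ⟨h1, h3⟩; exact ⟨h1, fun hx => hnoadj (hx ▸ h1), h3⟩
      rw [hint, if_neg hiv]
      simp
  have hbound : ∑ i ∈ (S \ C).erase v,
      (c i / (((G.neighborFinset i ∩ S.erase v).card : ℝ) + 1)
        - c i / (((G.neighborFinset i ∩ S).card : ℝ) + 1))
      ≤ c v / ((dv : ℝ) + 1) := by
    calc ∑ i ∈ (S \ C).erase v,
        (c i / (((G.neighborFinset i ∩ S.erase v).card : ℝ) + 1)
          - c i / (((G.neighborFinset i ∩ S).card : ℝ) + 1))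
        ≤ ∑ i ∈ (S \ C).erase v,
            (if i ∈ G.neighborFinset v ∩ S then c v / ((dv : ℝ) * ((dv : ℝ) + 1)) else 0) :=
          Finset.sum_le_sum key
      _ = ∑ i ∈ ((S \ C).erase v).filter (· ∈ G.neighborFinset v ∩ S),
            c v / ((dv : ℝ) * ((dv : ℝ) + 1)) := (Finset.sum_filter _ _).symm
      _ ≤ ∑ i ∈ G.neighborFinset v ∩ S, c v / ((dv : ℝ) * ((dv : ℝ) + 1)) := by
          apply Finset.sum_le_sum_of_subset_of_nonneg
          · intro x hx
            exact (mem_filter.mp hx).2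
          · intro x _ _
            positivity
      _ = (dv : ℝ) * (c v / ((dv : ℝ) * ((dv : ℝ) + 1))) := by
          rw [Finset.sum_const, nsmul_eq_mul]
      _ = c v / ((dv : ℝ) + 1) := by
          field_simp
  have := Finset.sum_sub_distrib (s := (S \ C).erase v)
    (f := fun i => c i / (((G.neighborFinset i ∩ S.erase v).card : ℝ) + 1))
    (g := fun i => c i / (((G.neighborFinset i ∩ S).card : ℝ) + 1))
  rw [this] at hbound
  linarith
end
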